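/- (Identifiable Counterfactuals, bivariate case.) Let P be a type, let f, g : P → ℝ → ℝ be such that every slice u ↦ f p u and u ↦ g p u is strictly monotone increasing, and let m, m' be Borel probability measures on ℝ satisfying Measure.map (f p) m = Measure.map (g p) m' for every p : P (the two models induce identical conditional distributions of the outcome given every parent value). Assume moreover that for every p : P the CDF of Measure.map (f p) m is injective. Then for all p, p' : P and u, u' : ℝ, if f p u = g p u' then f p' u = g p' u'. In other words, any two such structural models agreeing on all conditional distributions assign the same counterfactual outcome under do(PA = p') to every observation (PA = p, V = v), so the counterfactual outcome is identifiable from the conditional distributions. -/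
import Mathlib

open MeasureTheory

/-- The cumulative distribution function of a Borel measure on ℝ:
`F_m(x) = m((-∞, x])`. -/
noncomputable def cdfOf (m : Measure ℝ) (x : ℝ) : ℝ := (m (Set.Iic x)).toReal

lemma cdf_map_eq (h : ℝ → ℝ) (hh : StrictMono h) (m : Measure ℝ) (x : ℝ) :
    cdfOf (Measure.map h m) (h x) = cdfOf m x := by
  unfold cdfOf
  rw [Measure.map_apply (hh.monotone.measurable) measurableSet_Iic]
  congr 2
  ext y
  simp [hh.le_iff_le]

theorem counterfactual_identifiable_bivariate {P : Type*} (f g : P → ℝ → ℝ)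
    (hf : ∀ p : P, StrictMono (f p)) (hg : ∀ p : P, StrictMono (g p))
    (m m' : Measure ℝ) [IsProbabilityMeasure m] [IsProbabilityMeasure m']
    (heq : ∀ p : P, Measure.map (f p) m = Measure.map (g p) m')
    (hinj : ∀ p : P, Function.Injective (cdfOf (Measure.map (f p) m)))
    (p p' : P) (u u' : ℝ) (hobs : f p u = g p u') :
    f p' u = g p' u' := by
  have key : cdfOf m u = cdfOf m' u' := by
    rw [← cdf_map_eq (f p) (hf p) m u, ← cdf_map_eq (g p) (hg p) m' u', ← heq p, hobs]
  apply hinj p'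
  rw [cdf_map_eq (f p') (hf p') m u, key, heq p', cdf_map_eq (g p') (hg p') m' u']
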